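/- arXiv:2310.12422 — 3 statements merged into one kernel-verified Lean document; each statement's English description precedes it below -/
import Mathlib

section
/- Let M ≥ 1, let Ã₁, …, Ã_M ∈ ℝ^{N×N}, let 1 ≤ k ≤ N, and set 𝑁 = Σ_{m=1}^{M} Ã_m Ã_mᵀ, which is symmetric positive semidefinite with eigenvalues λ₁ ≥ … ≥ λ_N in descending order. Then the minimum of Σ_{m=1}^{M} ‖Ã_m − U V_mᵀ‖_F² over all U ∈ ℝ^{N×k} with UᵀU = I_k and all V₁, …, V_M ∈ ℝ^{N×k} equals Σ_{m=1}^{M} ‖Ã_m‖_F² − (λ₁ + … + λ_k), and this minimum is attained by taking the columns of U to be orthonormal eigenvectors of 𝑁 associated with the k largest eigenvalues and V_m = Ã_mᵀ U. -/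
open Matrix BigOperators

/-- The Frobenius norm of a real matrix `M`, `‖M‖_F = sqrt (tr (M * Mᵀ))`. -/
noncomputable def frobNorm {p q : ℕ} (M : Matrix (Fin p) (Fin q) ℝ) : ℝ :=
  Real.sqrt (M * Mᵀ).trace

lemma trace_mul_transpose_nonneg {p q : ℕ} (M : Matrix (Fin p) (Fin q) ℝ) :
    0 ≤ (M * Mᵀ).trace := by
  simp only [Matrix.trace, Matrix.diag, Matrix.mul_apply, Matrix.transpose_apply]
  exact Finset.sum_nonneg fun i _ => Finset.sum_nonneg fun j _ => mul_self_nonneg _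

lemma frobNorm_sq {p q : ℕ} (M : Matrix (Fin p) (Fin q) ℝ) :
    frobNorm M ^ 2 = (M * Mᵀ).trace :=
  Real.sq_sqrt (trace_mul_transpose_nonneg M)

lemma trace_expand {N k : ℕ} (A : Matrix (Fin N) (Fin N) ℝ) (U : Matrix (Fin N) (Fin k) ℝ)
    (V : Matrix (Fin N) (Fin k) ℝ) (hU : Uᵀ * U = 1) :
    ((A - U * Vᵀ) * (A - U * Vᵀ)ᵀ).trace
      = (A * Aᵀ).trace - (Uᵀ * (A * Aᵀ) * U).trace
        + ((Vᵀ - Uᵀ * A) * (Vᵀ - Uᵀ * A)ᵀ).trace := by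
  have h1 : (U * Vᵀ * Aᵀ).trace = (Vᵀ * Aᵀ * U).trace := by
    rw [Matrix.mul_assoc, Matrix.trace_mul_comm]
  have h2 : (A * (V * Uᵀ)).trace = (Uᵀ * A * V).trace := by
    rw [← Matrix.mul_assoc, Matrix.trace_mul_comm, Matrix.mul_assoc]
  have h3 : (U * Vᵀ * (V * Uᵀ)).trace = (Vᵀ * V).trace := by
    rw [show U * Vᵀ * (V * Uᵀ) = U * (Vᵀ * V) * Uᵀ by
      simp only [Matrix.mul_assoc]]
    rw [Matrix.trace_mul_comm, ← Matrix.mul_assoc, hU, Matrix.one_mul]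
  have h4 : (Uᵀ * (A * Aᵀ) * U).trace = (Uᵀ * A * (Aᵀ * U)).trace := by
    simp only [Matrix.mul_assoc]
  have h5 : (Vᵀ * (Aᵀ * U)).trace = (Uᵀ * A * V).trace := by
    rw [Matrix.trace_mul_comm]
    rw [← Matrix.trace_transpose (Aᵀ * U * Vᵀ)]
    simp only [Matrix.transpose_mul, Matrix.transpose_transpose]
    rw [Matrix.trace_mul_comm]
  have h7 : (Vᵀ * Aᵀ * U).trace = (Uᵀ * A * V).trace := by
    rw [← Matrix.trace_transpose (Vᵀ * Aᵀ * U)]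
    simp [Matrix.transpose_mul, Matrix.mul_assoc]
  simp only [Matrix.sub_mul, Matrix.mul_sub, Matrix.transpose_sub, Matrix.trace_sub,
    Matrix.transpose_mul, Matrix.transpose_transpose]
  rw [h1, h2, h3, h4, h5, h7]
  ring

lemma sum_ite_lt_eq {N k : ℕ} (hk1 : 1 ≤ k) (hkN : k ≤ N) (f : Fin N → ℝ) :
    (∑ i : Fin N, if i.val < k then f i else 0) = ∑ j : Fin k, f (Fin.castLE hkN j) := by
  rw [← Finset.sum_filter]
  refine Finset.sum_nbij' (fun i : Fin N => (⟨min i.1 (k-1), by omega⟩ : Fin k))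
    (fun j : Fin k => Fin.castLE hkN j) ?_ ?_ ?_ ?_ ?_
  · intro a ha; simp
  · intro a ha
    simp only [Finset.mem_filter, Finset.mem_univ, true_and, Fin.coe_castLE]
    exact a.isLt
  · intro a ha
    simp only [Finset.mem_filter] at ha
    ext; simp; omega
  · intro a ha; ext; simp; omega
  · intro a ha
    simp only [Finset.mem_filter] at ha
    congr 1; ext; simp; omega

lemma select_sum_le {N k : ℕ} (hk1 : 1 ≤ k) (hkN : k ≤ N)
    (lam : Fin N → ℝ) (hanti : Antitone lam)
    (c : Fin N → ℝ) (hc0 : ∀ i, 0 ≤ c i) (hc1 : ∀ i, c i ≤ 1)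
    (hsum : ∑ i, c i = k) :
    ∑ i, c i * lam i ≤ ∑ j : Fin k, lam (Fin.castLE hkN j) := by
  have hkN' : k - 1 < N := by omega
  set t := lam ⟨k - 1, hkN'⟩ with ht
  have hind : ∀ i : Fin N, c i * lam i ≤
      (if i.val < k then lam i else 0) + (c i - (if i.val < k then 1 else 0)) * t := by
    intro i
    by_cases h : i.val < k
    · simp only [h, if_pos]
      have hlam : t ≤ lam i := hanti (by simp [Fin.le_def]; omega)
      nlinarith [hc1 i, hc0 i]
    · simp only [h, if_neg, not_false_iff]
      have hlam : lam i ≤ t := hanti (by simp [Fin.le_def]; omega)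
      nlinarith [hc0 i]
  calc ∑ i, c i * lam i
      ≤ ∑ i, ((if i.val < k then lam i else 0) + (c i - (if i.val < k then 1 else 0)) * t) :=
        Finset.sum_le_sum fun i _ => hind i
    _ = (∑ i : Fin N, if i.val < k then lam i else 0)
        + ((∑ i, c i) - (∑ i : Fin N, if i.val < k then (1:ℝ) else 0)) * t := by
        rw [Finset.sum_add_distrib]
        congr 1
        simp only [sub_mul]
        rw [Finset.sum_sub_distrib, ← Finset.sum_mul, ← Finset.sum_mul]
    _ = ∑ j : Fin k, lam (Fin.castLE hkN j) := by
        rw [sum_ite_lt_eq hk1 hkN, sum_ite_lt_eq hk1 hkN (fun _ => (1:ℝ)), hsum]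
        simp

lemma col_sq_le_one {N k : ℕ} (U : Matrix (Fin N) (Fin k) ℝ) (hU : Uᵀ * U = 1)
    (w : Fin N → ℝ) (hw : w ⬝ᵥ w = 1) :
    (Uᵀ *ᵥ w) ⬝ᵥ (Uᵀ *ᵥ w) ≤ 1 := by
  set x := Uᵀ *ᵥ w with hx
  set y := U *ᵥ x with hy
  have hyy : y ⬝ᵥ y = x ⬝ᵥ x := by
    rw [hy, Matrix.dotProduct_mulVec, Matrix.vecMul_mulVec, hU, Matrix.vecMul_one]
  have hyw : y ⬝ᵥ w = x ⬝ᵥ x := by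
    conv_rhs => rw [hx]
    rw [Matrix.dotProduct_mulVec x, Matrix.vecMul_transpose, hy]
  have hcs : (y ⬝ᵥ w) ^ 2 ≤ (y ⬝ᵥ y) * (w ⬝ᵥ w) := by
    have := Finset.sum_mul_sq_le_sq_mul_sq Finset.univ y w
    simpa [dotProduct, sq] using this
  rw [hw, mul_one, hyw, hyy] at hcs
  nlinarith [Finset.sum_nonneg (fun i (_ : i ∈ Finset.univ) => mul_self_nonneg (x i))]

lemma kyfan {N k : ℕ} (hk1 : 1 ≤ k) (hkN : k ≤ N)
    (Nmat : Matrix (Fin N) (Fin N) ℝ) (hH : Nmat.IsHermitian)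
    (lam : Fin N → ℝ) (hanti : Antitone lam) (e : Fin N ≃ Fin N)
    (hlam : lam = hH.eigenvalues ∘ e)
    (U : Matrix (Fin N) (Fin k) ℝ) (hU : Uᵀ * U = 1) :
    (Uᵀ * Nmat * U).trace ≤ ∑ j : Fin k, lam (Fin.castLE hkN j) := by
  set W := (hH.eigenvectorUnitary : Matrix (Fin N) (Fin N) ℝ) with hW
  have hWtW : Wᵀ * W = 1 := by
    rw [hW, ← Matrix.conjTranspose_eq_transpose_of_trivial, ← Matrix.star_eq_conjTranspose]
    exact Unitary.coe_star_mul_self hH.eigenvectorUnitary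
  have hWWt : W * Wᵀ = 1 := by
    rw [hW, ← Matrix.conjTranspose_eq_transpose_of_trivial, ← Matrix.star_eq_conjTranspose]
    exact Unitary.coe_mul_star_self hH.eigenvectorUnitary
  have hspec : Nmat = W * diagonal hH.eigenvalues * Wᵀ := by
    conv_lhs => rw [hH.spectral_theorem]
    simp [hW, Function.comp, Matrix.star_eq_conjTranspose,
      Matrix.conjTranspose_eq_transpose_of_trivial]
  set B := Uᵀ * W with hB
  set c : Fin N → ℝ := fun i => ∑ j, (B j i)^2 with hc
  have htr : (Uᵀ * Nmat * U).trace = ∑ i, hH.eigenvalues i * c i := by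
    have hBDB : Uᵀ * Nmat * U = B * diagonal hH.eigenvalues * Bᵀ := by
      conv_lhs => rw [hspec]
      rw [hB]
      simp only [Matrix.transpose_mul, Matrix.transpose_transpose, Matrix.mul_assoc]
    rw [hBDB]
    simp only [Matrix.trace, Matrix.diag, Matrix.mul_apply, Matrix.mul_diagonal,
      Matrix.transpose_apply]
    rw [Finset.sum_comm]
    refine Finset.sum_congr rfl fun i _ => ?_
    rw [hc, Finset.mul_sum]
    refine Finset.sum_congr rfl fun j _ => ?_
    have hd : ∑ j1, B j j1 * Matrix.diagonal hH.eigenvalues j1 i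
        = B j i * hH.eigenvalues i := by
      simp [Matrix.diagonal_apply, mul_ite, Finset.sum_ite_eq']
    rw [hd]; ring
  have hcsum : ∑ i, c i = (k : ℝ) := by
    have h1 : B * Bᵀ = 1 := by
      rw [hB]
      simp only [Matrix.transpose_mul, Matrix.transpose_transpose]
      rw [Matrix.mul_assoc, ← Matrix.mul_assoc W, hWWt, Matrix.one_mul, hU]
    have h2 : ∑ i, c i = (Bᵀ * B).trace := by
      simp only [hc, Matrix.trace, Matrix.diag, Matrix.mul_apply, Matrix.transpose_apply, sq]
    rw [h2, Matrix.trace_mul_comm, h1, Matrix.trace_one]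
    simp
  have hc0 : ∀ i, 0 ≤ c i := fun i =>
    Finset.sum_nonneg fun j _ => sq_nonneg _
  have hc1 : ∀ i, c i ≤ 1 := by
    intro i
    have hwcol : (fun p => W p i) ⬝ᵥ (fun p => W p i) = 1 := by
      have : (Wᵀ * W) i i = (1 : Matrix (Fin N) (Fin N) ℝ) i i := by rw [hWtW]
      simpa [Matrix.mul_apply, dotProduct, Matrix.one_apply] using this
    have hx : (Uᵀ *ᵥ fun p => W p i) = fun j => B j i := by
      funext j
      simp [Matrix.mulVec, dotProduct, hB, Matrix.mul_apply]
    have := col_sq_le_one U hU (fun p => W p i) hwcol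
    rw [hx] at this
    simpa [dotProduct, hc, sq] using this
  have hreindex : ∑ i, hH.eigenvalues i * c i = ∑ i, (c (e i)) * lam i := by
    rw [← Equiv.sum_comp e (fun i => hH.eigenvalues i * c i)]
    refine Finset.sum_congr rfl fun i _ => ?_
    rw [hlam]; simp [mul_comm]
  rw [htr, hreindex]
  refine select_sum_le hk1 hkN lam hanti (fun i => c (e i)) (fun i => hc0 _) (fun i => hc1 _) ?_
  rw [Equiv.sum_comp e c, hcsum]

/-- **Optimal low-rank approximation of a family of matrices.** With
`𝑁 = ∑ m, A m * (A m)ᵀ` (symmetric positive semidefinite) having eigenvalues `lam` in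
descending order, the minimum of `∑ m, ‖A m − U * (V m)ᵀ‖_F²` over all semi-orthogonal
`U ∈ ℝ^{N×k}` and all `V₁, …, V_M ∈ ℝ^{N×k}` equals `∑ m, ‖A m‖_F² − (λ₁ + ⋯ + λ_k)`,
and the minimum is attained by taking the columns of `U` to be orthonormal eigenvectors
of `𝑁` for the `k` largest eigenvalues and `V m = (A m)ᵀ * U`. -/
theorem isLeast_sum_frobNorm_sq_low_rank_approx
    (M N k : ℕ) (hM : 1 ≤ M) (hk1 : 1 ≤ k) (hkN : k ≤ N)
    (A : Fin M → Matrix (Fin N) (Fin N) ℝ)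
    (Nmat : Matrix (Fin N) (Fin N) ℝ) (hNmat : Nmat = ∑ m : Fin M, A m * (A m)ᵀ)
    (hH : Nmat.IsHermitian) (hpsd : Nmat.PosSemidef)
    (lam : Fin N → ℝ) (hanti : Antitone lam)
    (hlam : ∃ e : Fin N ≃ Fin N, lam = hH.eigenvalues ∘ e) :
    IsLeast {t : ℝ | ∃ (U : Matrix (Fin N) (Fin k) ℝ) (V : Fin M → Matrix (Fin N) (Fin k) ℝ),
        Uᵀ * U = 1 ∧ t = ∑ m : Fin M, (frobNorm (A m - U * (V m)ᵀ)) ^ 2}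
      (∑ m : Fin M, (frobNorm (A m)) ^ 2 - ∑ i : Fin k, lam (Fin.castLE hkN i)) ∧
    ∃ U : Matrix (Fin N) (Fin k) ℝ, Uᵀ * U = 1 ∧
      (∀ j : Fin k,
        Nmat.mulVec (fun i => U i j) = lam (Fin.castLE hkN j) • (fun i => U i j)) ∧
      ∑ m : Fin M, (frobNorm (A m - U * ((A m)ᵀ * U)ᵀ)) ^ 2
        = ∑ m : Fin M, (frobNorm (A m)) ^ 2 - ∑ i : Fin k, lam (Fin.castLE hkN i) := by
  obtain ⟨e, hlam⟩ := hlam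
  -- the value of the objective with the optimal V
  have hval : ∀ U : Matrix (Fin N) (Fin k) ℝ, Uᵀ * U = 1 →
      ∑ m : Fin M, (frobNorm (A m - U * ((A m)ᵀ * U)ᵀ)) ^ 2
        = ∑ m : Fin M, (frobNorm (A m)) ^ 2 - (Uᵀ * Nmat * U).trace := by
    intro U hU
    have hNtr : (Uᵀ * Nmat * U).trace = ∑ m : Fin M, (Uᵀ * (A m * (A m)ᵀ) * U).trace := by
      rw [hNmat, Matrix.mul_sum, Matrix.sum_mul, Matrix.trace_sum]
    rw [hNtr, ← Finset.sum_sub_distrib]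
    refine Finset.sum_congr rfl fun m _ => ?_
    rw [frobNorm_sq, frobNorm_sq, trace_expand (A m) U ((A m)ᵀ * U) hU]
    have hz : ((A m)ᵀ * U)ᵀ - Uᵀ * A m = 0 := by
      simp [Matrix.transpose_mul]
    rw [hz]
    simp
  -- lower bound for arbitrary U, V
  have hlb : ∀ (U : Matrix (Fin N) (Fin k) ℝ) (V : Fin M → Matrix (Fin N) (Fin k) ℝ),
      Uᵀ * U = 1 →
      ∑ m : Fin M, (frobNorm (A m)) ^ 2 - ∑ i : Fin k, lam (Fin.castLE hkN i)
        ≤ ∑ m : Fin M, (frobNorm (A m - U * (V m)ᵀ)) ^ 2 := by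
    intro U V hU
    have hNtr : (Uᵀ * Nmat * U).trace = ∑ m : Fin M, (Uᵀ * (A m * (A m)ᵀ) * U).trace := by
      rw [hNmat, Matrix.mul_sum, Matrix.sum_mul, Matrix.trace_sum]
    have step1 : ∑ m : Fin M, (frobNorm (A m)) ^ 2 - (Uᵀ * Nmat * U).trace
        ≤ ∑ m : Fin M, (frobNorm (A m - U * (V m)ᵀ)) ^ 2 := by
      rw [hNtr, ← Finset.sum_sub_distrib]
      refine Finset.sum_le_sum fun m _ => ?_
      rw [frobNorm_sq, frobNorm_sq, trace_expand (A m) U (V m) hU]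
      have := trace_mul_transpose_nonneg ((V m)ᵀ - Uᵀ * A m)
      linarith
    have step2 : (Uᵀ * Nmat * U).trace ≤ ∑ i : Fin k, lam (Fin.castLE hkN i) :=
      kyfan hk1 hkN Nmat hH lam hanti e hlam U hU
    linarith
  -- construct the optimal U
  set W := (hH.eigenvectorUnitary : Matrix (Fin N) (Fin N) ℝ) with hW
  have hWtW : Wᵀ * W = 1 := by
    rw [hW, ← Matrix.conjTranspose_eq_transpose_of_trivial, ← Matrix.star_eq_conjTranspose]
    exact Unitary.coe_star_mul_self hH.eigenvectorUnitary
  set U₀ : Matrix (Fin N) (Fin k) ℝ :=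
    Matrix.of fun i j => W i (e (Fin.castLE hkN j)) with hU₀def
  have hU₀ : U₀ᵀ * U₀ = 1 := by
    ext j j'
    have h := congrFun (congrFun hWtW (e (Fin.castLE hkN j))) (e (Fin.castLE hkN j'))
    simp only [Matrix.mul_apply, Matrix.transpose_apply, Matrix.one_apply] at h ⊢
    simp only [hU₀def, Matrix.of_apply]
    rw [h]
    by_cases hjj : j = j'
    · simp [hjj]
    · have : e (Fin.castLE hkN j) ≠ e (Fin.castLE hkN j') := by
        simp only [ne_eq, EmbeddingLike.apply_eq_iff_eq]
        exact fun hc => hjj (Fin.castLE_injective hkN hc)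
      simp [this, hjj]
  have heig : ∀ j : Fin k,
      Nmat.mulVec (fun i => U₀ i j) = lam (Fin.castLE hkN j) • (fun i => U₀ i j) := by
    intro j
    have hcol : (fun i => U₀ i j) = ⇑(hH.eigenvectorBasis (e (Fin.castLE hkN j))) := by
      funext i
      simp [hU₀def, hW, Matrix.IsHermitian.eigenvectorUnitary_apply]
    rw [hcol, hH.mulVec_eigenvectorBasis, hlam]
    rfl
  -- trace equality for U₀
  have htrU₀ : (U₀ᵀ * Nmat * U₀).trace = ∑ i : Fin k, lam (Fin.castLE hkN i) := by
    rw [Matrix.mul_assoc, Matrix.trace]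
    refine Finset.sum_congr rfl fun j _ => ?_
    have hcolj : ∀ i, (Nmat * U₀) i j = lam (Fin.castLE hkN j) * U₀ i j := by
      intro i
      have := congrFun (heig j) i
      simpa [Matrix.mulVec, dotProduct, Matrix.mul_apply] using this
    have hdiag : (U₀ᵀ * U₀) j j = 1 := by rw [hU₀]; simp
    show (U₀ᵀ * (Nmat * U₀)) j j = lam (Fin.castLE hkN j)
    rw [Matrix.mul_apply]
    have : ∀ i, U₀ᵀ j i * (Nmat * U₀) i j
        = lam (Fin.castLE hkN j) * (U₀ i j * U₀ i j) := by
      intro i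
      rw [Matrix.transpose_apply, hcolj i]; ring
    rw [Finset.sum_congr rfl fun i _ => this i, ← Finset.mul_sum]
    simp only [Matrix.mul_apply, Matrix.transpose_apply] at hdiag
    rw [hdiag, mul_one]
  have hattain : ∑ m : Fin M, (frobNorm (A m - U₀ * ((A m)ᵀ * U₀)ᵀ)) ^ 2
      = ∑ m : Fin M, (frobNorm (A m)) ^ 2 - ∑ i : Fin k, lam (Fin.castLE hkN i) := by
    rw [hval U₀ hU₀, htrU₀]
  refine ⟨⟨⟨U₀, fun m => (A m)ᵀ * U₀, hU₀, hattain.symm⟩, ?_⟩, U₀, hU₀, heig, hattain⟩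
  rintro t ⟨U, V, hU, rfl⟩
  exact hlb U V hU
end

section
/- Let B ∈ ℝ^{N×N} with singular values σ₁ ≥ σ₂ ≥ … ≥ σ_N ≥ 0 (the square roots of the eigenvalues of BᵀB listed in descending order with multiplicity), and let 0 ≤ k ≤ N. Then for every matrix X ∈ ℝ^{N×N} with rank(X) ≤ k, one has ‖B − X‖_F² ≥ σ_{k+1}² + σ_{k+2}² + … + σ_N². -/
open Matrix BigOperators

section Aux

open Matrix

private lemma ey_card_filter_le (N k : ℕ) :
    (Finset.univ.filter (fun i : Fin N => k ≤ (i : ℕ))).card = N - k := by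
  rw [Finset.card_filter, Fin.sum_univ_eq_sum_range (fun i => if k ≤ i then 1 else 0),
    ← Finset.sum_filter]
  rw [Finset.range_eq_Ico, Finset.Ico_filter_le]
  simp

private lemma ey_spectral_diag {N : ℕ} (A : Matrix (Fin N) (Fin N) ℝ) (hA : A.IsHermitian) :
    A = (hA.eigenvectorUnitary : Matrix (Fin N) (Fin N) ℝ) * Matrix.diagonal hA.eigenvalues *
      (hA.eigenvectorUnitary : Matrix (Fin N) (Fin N) ℝ)ᵀ := by
  have hspec := hA.spectral_theorem
  simpa [star_eq_conjTranspose, Matrix.conjTranspose_eq_transpose_of_trivial,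
    Function.comp] using hspec

private lemma ey_Q_mul_Qt {N : ℕ} (A : Matrix (Fin N) (Fin N) ℝ) (hA : A.IsHermitian) :
    (hA.eigenvectorUnitary : Matrix (Fin N) (Fin N) ℝ) *
      (hA.eigenvectorUnitary : Matrix (Fin N) (Fin N) ℝ)ᵀ = 1 := by
  have := (Matrix.mem_unitaryGroup_iff).mp hA.eigenvectorUnitary.2
  simpa [star_eq_conjTranspose, Matrix.conjTranspose_eq_transpose_of_trivial] using this

private lemma ey_Qt_mul_Q {N : ℕ} (A : Matrix (Fin N) (Fin N) ℝ) (hA : A.IsHermitian) :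
    (hA.eigenvectorUnitary : Matrix (Fin N) (Fin N) ℝ)ᵀ *
      (hA.eigenvectorUnitary : Matrix (Fin N) (Fin N) ℝ) = 1 := by
  have := (Matrix.mem_unitaryGroup_iff').mp hA.eigenvectorUnitary.2
  simpa [star_eq_conjTranspose, Matrix.conjTranspose_eq_transpose_of_trivial] using this

private lemma ey_trace_eq_sum_eig {N : ℕ} (A : Matrix (Fin N) (Fin N) ℝ)
    (hA : A.IsHermitian) : A.trace = ∑ i, hA.eigenvalues i := by
  conv_lhs => rw [ey_spectral_diag A hA]
  rw [Matrix.trace_mul_cycle, ey_Qt_mul_Q A hA, one_mul]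
  simp [Matrix.trace, Matrix.diag]

private lemma ey_key_trace {N m : ℕ} (A : Matrix (Fin N) (Fin N) ℝ) (hA : A.IsHermitian)
    (U : Matrix (Fin N) (Fin m) ℝ) (hU : Uᵀ * U = 1) :
    ∃ t : Fin N → ℝ, (∀ i, 0 ≤ t i) ∧ (∀ i, t i ≤ 1) ∧ (∑ i, t i = m) ∧
      (Uᵀ * A * U).trace = ∑ i, hA.eigenvalues i * t i := by
  set Q : Matrix (Fin N) (Fin N) ℝ := (hA.eigenvectorUnitary : Matrix (Fin N) (Fin N) ℝ) with hQ
  have hQ1 : Q * Qᵀ = 1 := ey_Q_mul_Qt A hA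
  have hQ2 : Qᵀ * Q = 1 := ey_Qt_mul_Q A hA
  set W : Matrix (Fin N) (Fin m) ℝ := Qᵀ * U with hWdef
  have hW : Wᵀ * W = 1 := by
    calc Wᵀ * W = Uᵀ * (Q * Qᵀ) * U := by
          simp [hWdef, Matrix.transpose_mul, Matrix.mul_assoc]
    _ = 1 := by rw [hQ1]; simpa using hU
  refine ⟨fun i => ∑ j, W i j ^ 2, fun i => Finset.sum_nonneg fun j _ => sq_nonneg _,
    ?_, ?_, ?_⟩
  · intro i
    set P := W * Wᵀ with hPdef
    have hPsymm : ∀ a b, P a b = P b a := by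
      intro a b
      have : Pᵀ = P := by simp [hPdef, Matrix.transpose_mul]
      calc P a b = Pᵀ b a := rfl
      _ = P b a := by rw [this]
    have hPP : P * P = P := by
      calc P * P = W * (Wᵀ * W) * Wᵀ := by simp [hPdef, Matrix.mul_assoc]
      _ = P := by rw [hW]; simp [hPdef]
    have h1 : P i i = ∑ j, (P i j)^2 := by
      calc P i i = (P * P) i i := by rw [hPP]
      _ = ∑ j, P i j * P j i := Matrix.mul_apply
      _ = ∑ j, (P i j)^2 := Finset.sum_congr rfl fun j _ => by rw [hPsymm j i, sq]
    have h2 : (P i i)^2 ≤ P i i := by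
      conv_rhs => rw [h1]
      exact Finset.single_le_sum (f := fun j => (P i j)^2) (fun j _ => sq_nonneg _)
        (Finset.mem_univ i)
    have h0 : 0 ≤ P i i := by
      rw [h1]; exact Finset.sum_nonneg fun j _ => sq_nonneg _
    have hPii : P i i = ∑ j, W i j ^ 2 := by simp [hPdef, Matrix.mul_apply, sq]
    show ∑ j, W i j ^ 2 ≤ 1
    rw [← hPii]
    nlinarith
  · have : ∑ i, ∑ j, W i j ^ 2 = (W * Wᵀ).trace := by
      simp [Matrix.trace, Matrix.mul_apply, sq, Matrix.diag]
    rw [this, Matrix.trace_mul_comm, hW]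
    simp
  · have hD : A = Q * Matrix.diagonal hA.eigenvalues * Qᵀ := ey_spectral_diag A hA
    calc (Uᵀ * A * U).trace = (Wᵀ * (Matrix.diagonal hA.eigenvalues * W)).trace := by
          conv_lhs => rw [hD]
          simp [hWdef, Matrix.transpose_mul, Matrix.mul_assoc]
    _ = (Matrix.diagonal hA.eigenvalues * (W * Wᵀ)).trace := by
          rw [Matrix.trace_mul_comm, Matrix.mul_assoc]
    _ = ∑ i, hA.eigenvalues i * (W * Wᵀ) i i := by
          simp [Matrix.trace, Matrix.diag, Matrix.diagonal_mul]
    _ = ∑ i, hA.eigenvalues i * ∑ j, W i j ^ 2 := by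
          simp [Matrix.mul_apply, sq]

private lemma ey_rearr {N k : ℕ} (hkN : k ≤ N) (μ : Fin N → ℝ)
    (hanti : Antitone μ) (hnn : ∀ i, 0 ≤ μ i)
    (t : Fin N → ℝ) (h0 : ∀ i, 0 ≤ t i) (h1 : ∀ i, t i ≤ 1)
    (hsum : ∑ i, t i = (N - k : ℕ)) :
    ∑ i ∈ Finset.univ.filter (fun i : Fin N => k ≤ (i : ℕ)), μ i ≤ ∑ i, μ i * t i := by
  rcases eq_or_lt_of_le hkN with heq | hk
  · have hempty : ∀ i : Fin N, ¬ (k ≤ (i : ℕ)) := fun i => by have := i.isLt; omega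
    rw [Finset.filter_false_of_mem (fun i _ => hempty i)]
    simp only [Finset.sum_empty]
    exact Finset.sum_nonneg fun i _ => mul_nonneg (hnn i) (h0 i)
  · set c := μ ⟨k, hk⟩ with hc
    have key : ∀ i : Fin N,
        c * t i - (if k ≤ (i : ℕ) then c else 0)
          ≤ μ i * t i - (if k ≤ (i : ℕ) then μ i else 0) := by
      intro i
      by_cases hi : k ≤ (i : ℕ)
      · simp only [hi, if_pos]
        have hμc : μ i ≤ c := hanti (by exact hi : (⟨k, hk⟩ : Fin N) ≤ i)
        nlinarith [h1 i, h0 i]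
      · simp only [hi, if_neg, not_false_iff]
        have hcμ : c ≤ μ i :=
          hanti (by exact Nat.le_of_lt (Nat.lt_of_not_le hi) : i ≤ (⟨k, hk⟩ : Fin N))
        simp only [sub_zero]
        exact mul_le_mul_of_nonneg_right hcμ (h0 i)
    have h := Finset.sum_le_sum (fun i (_ : i ∈ Finset.univ) => key i)
    have e1 : ∑ i : Fin N, (c * t i - (if k ≤ (i : ℕ) then c else 0)) = 0 := by
      rw [Finset.sum_sub_distrib, ← Finset.mul_sum, hsum, ← Finset.sum_filter,
        Finset.sum_const, ey_card_filter_le]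
      simp [nsmul_eq_mul, mul_comm]
    have e2 : ∑ i : Fin N, (μ i * t i - (if k ≤ (i : ℕ) then μ i else 0))
        = ∑ i, μ i * t i - ∑ i ∈ Finset.univ.filter (fun i : Fin N => k ≤ (i : ℕ)), μ i := by
      rw [Finset.sum_sub_distrib, ← Finset.sum_filter]
    rw [e1, e2] at h
    linarith

private lemma ey_exists_U {N k : ℕ} (hkN : k ≤ N) (X : Matrix (Fin N) (Fin N) ℝ)
    (hX : X.rank ≤ k) :
    ∃ U : Matrix (Fin N) (Fin (N - k)) ℝ, Uᵀ * U = 1 ∧ X * U = 0 := by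
  classical
  set f : EuclideanSpace ℝ (Fin N) ≃ₗ[ℝ] (Fin N → ℝ) :=
    WithLp.linearEquiv 2 ℝ (Fin N → ℝ) with hf
  set K : Submodule ℝ (Fin N → ℝ) := LinearMap.ker X.mulVecLin with hK
  set K' : Submodule ℝ (EuclideanSpace ℝ (Fin N)) := K.comap f.toLinearMap with hK'
  have hfinK : Module.finrank ℝ K + X.rank = N := by
    have h := LinearMap.finrank_range_add_finrank_ker X.mulVecLin
    have h2 : Module.finrank ℝ (Fin N → ℝ) = N := by simp
    rw [h2, ← hK] at h
    simp only [Matrix.rank]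
    omega
  have hK'K : Module.finrank ℝ K' = Module.finrank ℝ K := by
    rw [hK', Submodule.comap_equiv_eq_map_symm]
    exact LinearEquiv.finrank_map_eq f.symm K
  have hdim : N - k ≤ Module.finrank ℝ K' := by omega
  set b := stdOrthonormalBasis ℝ K' with hb
  set u : Fin (N - k) → EuclideanSpace ℝ (Fin N) :=
    fun j => (b (Fin.castLE hdim j) : K') with hu
  have hortho : ∀ a c : Fin (N - k), inner ℝ (u a) (u c) = (if a = c then (1:ℝ) else 0) := by
    intro a c
    have := b.orthonormal
    rw [orthonormal_iff_ite] at this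
    have h := this (Fin.castLE hdim a) (Fin.castLE hdim c)
    rw [Submodule.coe_inner] at h
    rw [hu]
    simp only at h ⊢
    rw [h]
    congr 1
    simp [Fin.castLE, Fin.ext_iff]
  have hker : ∀ j, X *ᵥ (fun i => u j i) = 0 := by
    intro j
    have hmem : u j ∈ K' := (b (Fin.castLE hdim j)).2
    rw [hK', Submodule.mem_comap] at hmem
    simp [hK, Matrix.mulVecLin] at hmem
    exact hmem
  refine ⟨Matrix.of (fun i j => u j i), ?_, ?_⟩
  · ext a c
    have := hortho a c
    rw [PiLp.inner_apply] at this
    simp only [Matrix.mul_apply, Matrix.transpose_apply, Matrix.of_apply, Matrix.one_apply]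
    simp [RCLike.inner_apply, conj_trivial] at this ⊢
    rw [← this]
    exact Finset.sum_congr rfl fun _ _ => mul_comm _ _
  · ext i j
    have := congrFun (hker j) i
    simp only [Matrix.mul_apply, Matrix.of_apply, Matrix.zero_apply]
    simpa [Matrix.mulVec, dotProduct] using this

end Aux

/-- **Eckart–Young lower bound (Frobenius norm).** Let `B ∈ ℝ^{N×N}` with singular values
`σ₁ ≥ ⋯ ≥ σ_N ≥ 0` (square roots of the eigenvalues of `Bᵀ * B` in descending order with
multiplicity) and `0 ≤ k ≤ N`. Then for every `X` of rank at most `k`,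
`‖B − X‖_F² ≥ σ_{k+1}² + ⋯ + σ_N²`. -/
theorem eckart_young_lower_bound
    (N k : ℕ) (hkN : k ≤ N)
    (B : Matrix (Fin N) (Fin N) ℝ)
    (hH : (Bᵀ * B).IsHermitian)
    (σ : Fin N → ℝ) (hanti : Antitone σ) (hnonneg : ∀ i, 0 ≤ σ i)
    (hσ : ∃ e : Fin N ≃ Fin N, (fun i => σ i ^ 2) = hH.eigenvalues ∘ e)
    (X : Matrix (Fin N) (Fin N) ℝ) (hX : X.rank ≤ k) :
    ∑ i ∈ Finset.univ.filter (fun i : Fin N => k ≤ (i : ℕ)), σ i ^ 2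
      ≤ (frobNorm (B - X)) ^ 2 := by
  classical
  obtain ⟨e, he⟩ := hσ
  obtain ⟨U, hU, hXU⟩ := ey_exists_U hkN X hX
  set Y := B - X with hYdef
  have hHY : (Yᵀ * Y).IsHermitian := by
    have := Matrix.isHermitian_conjTranspose_mul_self Y
    simpa [Matrix.conjTranspose_eq_transpose_of_trivial] using this
  have hPSD : (Yᵀ * Y).PosSemidef := by
    have := Matrix.posSemidef_conjTranspose_mul_self Y
    simpa [Matrix.conjTranspose_eq_transpose_of_trivial] using this
  have hUAU : Uᵀ * (Bᵀ * B) * U = Uᵀ * (Yᵀ * Y) * U := by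
    have h1 : Y * U = B * U := by rw [hYdef, Matrix.sub_mul, hXU, sub_zero]
    calc Uᵀ * (Bᵀ * B) * U = (B * U)ᵀ * (B * U) := by
          simp [Matrix.transpose_mul, Matrix.mul_assoc]
    _ = (Y * U)ᵀ * (Y * U) := by rw [h1]
    _ = Uᵀ * (Yᵀ * Y) * U := by simp [Matrix.transpose_mul, Matrix.mul_assoc]
  obtain ⟨t, ht0, ht1, htsum, htr⟩ := ey_key_trace (Bᵀ * B) hH U hU
  obtain ⟨s, hs0, hs1, _, hstr⟩ := ey_key_trace (Yᵀ * Y) hHY U hU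
  have hlow : ∑ i ∈ Finset.univ.filter (fun i : Fin N => k ≤ (i : ℕ)), σ i ^ 2
      ≤ (Uᵀ * (Bᵀ * B) * U).trace := by
    rw [htr]
    have hre : ∑ i, hH.eigenvalues i * t i = ∑ i, σ i ^ 2 * t (e i) := by
      rw [← Equiv.sum_comp e (fun i => hH.eigenvalues i * t i)]
      refine Finset.sum_congr rfl fun i _ => ?_
      have := congrFun he i
      simp only [Function.comp] at this
      rw [this]
    rw [hre]
    refine ey_rearr hkN (fun i => σ i ^ 2) ?_ (fun i => sq_nonneg _)
      (fun i => t (e i)) (fun i => ht0 _) (fun i => ht1 _) ?_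
    · intro a b hab
      exact pow_le_pow_left₀ (hnonneg b) (hanti hab) 2
    · rw [Equiv.sum_comp e t, htsum]
  have hup : (Uᵀ * (Yᵀ * Y) * U).trace ≤ (Yᵀ * Y).trace := by
    rw [hstr, ey_trace_eq_sum_eig (Yᵀ * Y) hHY]
    refine Finset.sum_le_sum fun i _ => ?_
    have hnn : 0 ≤ hHY.eigenvalues i := hPSD.eigenvalues_nonneg i
    nlinarith [hs0 i, hs1 i]
  have hfr : (frobNorm Y) ^ 2 = (Y * Yᵀ).trace := by
    rw [frobNorm, Real.sq_sqrt]
    have : (Y * Yᵀ).trace = ∑ i, ∑ j, (Y i j) ^ 2 := by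
      simp [Matrix.trace, Matrix.diag, Matrix.mul_apply, sq]
    rw [this]
    exact Finset.sum_nonneg fun i _ => Finset.sum_nonneg fun j _ => sq_nonneg _
  have htt : (Y * Yᵀ).trace = (Yᵀ * Y).trace := Matrix.trace_mul_comm Y Yᵀ
  calc ∑ i ∈ Finset.univ.filter (fun i : Fin N => k ≤ (i : ℕ)), σ i ^ 2
      ≤ (Uᵀ * (Bᵀ * B) * U).trace := hlow
  _ = (Uᵀ * (Yᵀ * Y) * U).trace := by rw [hUAU]
  _ ≤ (Yᵀ * Y).trace := hup
  _ = (frobNorm Y) ^ 2 := by rw [hfr, htt]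
end

section
/- Let B ∈ ℝ^{N×N} with singular values σ₁ ≥ σ₂ ≥ … ≥ σ_N ≥ 0 (the square roots of the eigenvalues of BᵀB listed in descending order with multiplicity), and let 0 ≤ k ≤ N. Then there exists a matrix B* ∈ ℝ^{N×N} with rank(B*) ≤ k such that ‖B − B*‖_F² = σ_{k+1}² + σ_{k+2}² + … + σ_N²; consequently the minimum of ‖B − X‖_F over matrices X of rank at most k equals sqrt(σ_{k+1}² + … + σ_N²) and is attained by the rank-k truncated singular value decomposition of B. -/
open Matrix BigOperators

section EYaux

open Finset

private lemma EY_toEuclideanLin_mul {N : ℕ} (A B : Matrix (Fin N) (Fin N) ℝ) :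
    Matrix.toEuclideanLin (A * B) = Matrix.toEuclideanLin A ∘ₗ Matrix.toEuclideanLin B := by
  rw [Matrix.toEuclideanLin_eq_toLin]
  exact Matrix.toLin_mul _ _ _ A B

/-- Existence of the orthogonal projection onto the row space of `X`, as a matrix. -/
private lemma EY_exists_proj (N k : ℕ) (X : Matrix (Fin N) (Fin N) ℝ) (hX : X.rank ≤ k) :
    ∃ Q : Matrix (Fin N) (Fin N) ℝ, Qᵀ = Q ∧ Q * Q = Q ∧ X * Q = X ∧ Q.trace ≤ (k : ℝ) := by
  classical
  set S : Submodule ℝ (EuclideanSpace ℝ (Fin N)) :=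
    LinearMap.range (Matrix.toEuclideanLin Xᵀ) with hS
  let f : EuclideanSpace ℝ (Fin N) →ₗ[ℝ] EuclideanSpace ℝ (Fin N) :=
    S.subtype ∘ₗ (S.orthogonalProjectionOnto : EuclideanSpace ℝ (Fin N) →ₗ[ℝ] S)
  set Q : Matrix (Fin N) (Fin N) ℝ := Matrix.toEuclideanLin.symm f with hQ
  have hfix : ∀ v : EuclideanSpace ℝ (Fin N), v ∈ S → f v = v := by
    intro v hv
    show (S.subtype (S.orthogonalProjectionOnto v) : EuclideanSpace ℝ (Fin N)) = v
    simpa using S.starProjection_eq_self_iff.mpr hv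
  have hsymm : Qᵀ = Q := by
    have hsym : (Matrix.toEuclideanLin Q).IsSymmetric := by
      rw [hQ, LinearEquiv.apply_symm_apply]
      intro x y
      simpa [f] using S.inner_starProjection_left_eq_right x y
    have := Matrix.isHermitian_iff_isSymmetric.2 hsym
    simpa [Matrix.IsHermitian] using this
  have hidem : Q * Q = Q := by
    apply Matrix.toEuclideanLin.injective
    rw [EY_toEuclideanLin_mul, hQ, LinearEquiv.apply_symm_apply]
    ext v
    have : f v ∈ S := Submodule.coe_mem _
    rw [LinearMap.comp_apply, hfix _ this]
  have hXQ : X * Q = X := by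
    have h1 : Q * Xᵀ = Xᵀ := by
      apply Matrix.toEuclideanLin.injective
      rw [EY_toEuclideanLin_mul, hQ, LinearEquiv.apply_symm_apply]
      ext v
      rw [LinearMap.comp_apply, hfix _ ⟨v, rfl⟩]
    calc X * Q = (Qᵀ * Xᵀ)ᵀ := by simp
    _ = (Q * Xᵀ)ᵀ := by rw [hsymm]
    _ = X := by rw [h1, Matrix.transpose_transpose]
  have htr : Q.trace ≤ (k : ℝ) := by
    have hproj : LinearMap.IsProj S f := ⟨fun x => Submodule.coe_mem _, hfix⟩
    have htrf : LinearMap.trace ℝ _ f = (Module.finrank ℝ S : ℝ) := hproj.trace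
    have htrQ : Q.trace = LinearMap.trace ℝ _ f := by
      rw [LinearMap.trace_eq_matrix_trace ℝ (PiLp.basisFun 2 ℝ (Fin N)) f]
      congr 1
    have hrk : Module.finrank ℝ S = Xᵀ.rank := by
      rw [Xᵀ.rank_eq_finrank_range_toLin (PiLp.basisFun 2 ℝ (Fin N)) (PiLp.basisFun 2 ℝ (Fin N)),
        ← Matrix.toEuclideanLin_eq_toLin]
    have : Xᵀ.rank ≤ k := by rwa [Matrix.rank_transpose]
    rw [htrQ, htrf, hrk]
    exact_mod_cast this
  exact ⟨Q, hsymm, hidem, hXQ, htr⟩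

private lemma EY_card_filt {N k : ℕ} (h : k ≤ N) :
    (Finset.univ.filter fun i : Fin N => (i : ℕ) < k).card = k := by
  have : (Finset.univ.filter fun i : Fin N => (i : ℕ) < k)
      = Finset.univ.map (Fin.castLEEmb h) := by
    ext i
    simp only [mem_filter, mem_univ, true_and, mem_map, Fin.castLEEmb_apply]
    constructor
    · intro hi; exact ⟨⟨i, hi⟩, by ext; simp⟩
    · rintro ⟨j, rfl⟩; simp
  rw [this, Finset.card_map, Finset.card_univ, Fintype.card_fin]

private lemma EY_count_le {N k : ℕ} (hk : k ≤ N) (μ t : Fin N → ℝ) (hμa : Antitone μ)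
    (hμ0 : ∀ i, 0 ≤ μ i) (ht0 : ∀ i, 0 ≤ t i) (ht1 : ∀ i, t i ≤ 1)
    (hts : ∑ i, t i ≤ (k : ℝ)) :
    ∑ i, μ i * t i ≤ ∑ i ∈ Finset.univ.filter (fun i : Fin N => (i : ℕ) < k), μ i := by
  classical
  by_cases hkN : k < N
  · set c : ℝ := μ ⟨k, hkN⟩ with hc
    set F := Finset.univ.filter (fun i : Fin N => (i : ℕ) < k) with hF
    have hsplit : ∑ i, μ i * t i
        = ∑ i ∈ F, μ i * t i + ∑ i ∈ Finset.univ.filter (fun i : Fin N => ¬ (i : ℕ) < k), μ i * t i :=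
      (Finset.sum_filter_add_sum_filter_not _ _ _).symm
    have h1 : ∑ i ∈ Finset.univ.filter (fun i : Fin N => ¬ (i : ℕ) < k), μ i * t i
        ≤ c * ∑ i ∈ Finset.univ.filter (fun i : Fin N => ¬ (i : ℕ) < k), t i := by
      rw [Finset.mul_sum]
      apply Finset.sum_le_sum
      intro i hi
      simp only [mem_filter, mem_univ, true_and, not_lt] at hi
      exact mul_le_mul_of_nonneg_right (hμa (by exact hi : (⟨k, hkN⟩ : Fin N) ≤ i)) (ht0 i)
    have h2 : ∑ i ∈ Finset.univ.filter (fun i : Fin N => ¬ (i : ℕ) < k), t i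
        ≤ ∑ i ∈ F, (1 - t i) := by
      have hsum : ∑ i ∈ F, t i + ∑ i ∈ Finset.univ.filter (fun i : Fin N => ¬ (i : ℕ) < k), t i
          = ∑ i, t i := Finset.sum_filter_add_sum_filter_not _ _ _
      have hcard : ∑ i ∈ F, (1 : ℝ) = (k : ℝ) := by
        simp [hF, EY_card_filt hk]
      have : ∑ i ∈ F, (1 - t i) = (k : ℝ) - ∑ i ∈ F, t i := by
        rw [Finset.sum_sub_distrib, hcard]
      rw [this]
      linarith
    have h3 : c * ∑ i ∈ Finset.univ.filter (fun i : Fin N => ¬ (i : ℕ) < k), t i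
        ≤ ∑ i ∈ F, μ i * (1 - t i) := by
      calc c * ∑ i ∈ Finset.univ.filter (fun i : Fin N => ¬ (i : ℕ) < k), t i
          ≤ c * ∑ i ∈ F, (1 - t i) := mul_le_mul_of_nonneg_left h2 (hμ0 _)
        _ = ∑ i ∈ F, c * (1 - t i) := Finset.mul_sum _ _ _
        _ ≤ ∑ i ∈ F, μ i * (1 - t i) := by
            apply Finset.sum_le_sum
            intro i hi
            simp only [hF, mem_filter, mem_univ, true_and] at hi
            have : i ≤ (⟨k, hkN⟩ : Fin N) := by exact le_of_lt hi
            exact mul_le_mul_of_nonneg_right (hμa this) (by linarith [ht1 i])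
    have : ∑ i, μ i * t i ≤ ∑ i ∈ F, (μ i * t i + μ i * (1 - t i)) := by
      rw [hsplit, Finset.sum_add_distrib]
      linarith
    calc ∑ i, μ i * t i ≤ ∑ i ∈ F, (μ i * t i + μ i * (1 - t i)) := this
      _ = ∑ i ∈ F, μ i := by apply Finset.sum_congr rfl; intro i _; ring
  · have hNk : k = N := le_antisymm hk (not_lt.1 hkN)
    have : (Finset.univ.filter fun i : Fin N => (i : ℕ) < k) = Finset.univ := by
      ext i; simp [hNk, i.isLt]
    rw [this]
    apply Finset.sum_le_sum
    intro i _
    simpa using mul_le_mul_of_nonneg_left (ht1 i) (hμ0 i)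

/-- Spectral decomposition with a permutation of the eigenvalues. -/
private lemma EY_exists_W {N : ℕ} (B : Matrix (Fin N) (Fin N) ℝ) (hH : (Bᵀ * B).IsHermitian)
    (σ : Fin N → ℝ) (e : Fin N ≃ Fin N) (hσe : (fun i => σ i ^ 2) = hH.eigenvalues ∘ e) :
    ∃ W : Matrix (Fin N) (Fin N) ℝ, Wᵀ * W = 1 ∧ W * Wᵀ = 1 ∧
      Bᵀ * B = W * Matrix.diagonal (fun i => σ i ^ 2) * Wᵀ := by
  classical
  set U : Matrix (Fin N) (Fin N) ℝ := (hH.eigenvectorUnitary : Matrix (Fin N) (Fin N) ℝ) with hU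
  have hU1 : Uᵀ * U = 1 := by
    have := (Matrix.mem_unitaryGroup_iff').mp hH.eigenvectorUnitary.2
    simpa [star_eq_conjTranspose, Matrix.conjTranspose_eq_transpose_of_trivial] using this
  have hU2 : U * Uᵀ = 1 := by
    have := (Matrix.mem_unitaryGroup_iff).mp hH.eigenvectorUnitary.2
    simpa [star_eq_conjTranspose, Matrix.conjTranspose_eq_transpose_of_trivial] using this
  have hspec : Bᵀ * B = U * Matrix.diagonal hH.eigenvalues * Uᵀ := by
    have := hH.spectral_theorem
    simpa [star_eq_conjTranspose, Matrix.conjTranspose_eq_transpose_of_trivial, Function.comp] using this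
  refine ⟨U.submatrix id e, ?_, ?_, ?_⟩
  · have : (U.submatrix id e)ᵀ = Uᵀ.submatrix e id := rfl
    rw [this]
    rw [show (id : Fin N → Fin N) = ⇑(Equiv.refl (Fin N)) from rfl,
      Matrix.submatrix_mul_equiv Uᵀ U e (Equiv.refl (Fin N)) e, hU1, Matrix.submatrix_one_equiv]
  · have : (U.submatrix id e)ᵀ = Uᵀ.submatrix e id := rfl
    rw [this]
    rw [show (id : Fin N → Fin N) = ⇑(Equiv.refl (Fin N)) from rfl,
      Matrix.submatrix_mul_equiv, hU2, Matrix.submatrix_one_equiv]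
  · have h1 : (U.submatrix id e)ᵀ = Uᵀ.submatrix e id := rfl
    have h2 : Matrix.diagonal (fun i => σ i ^ 2) = (Matrix.diagonal hH.eigenvalues).submatrix e e := by
      rw [Matrix.submatrix_diagonal_equiv]
      rw [show (fun i => σ i ^ 2) = hH.eigenvalues ∘ e from hσe]
    rw [h1, h2, show (id : Fin N → Fin N) = ⇑(Equiv.refl (Fin N)) from rfl,
      Matrix.submatrix_mul_equiv, Matrix.submatrix_mul_equiv,
      show ⇑(Equiv.refl (Fin N)) = id from rfl, Matrix.submatrix_id_id]
    exact hspec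

private lemma EY_trace_mul_transpose_nonneg {N : ℕ} (M : Matrix (Fin N) (Fin N) ℝ) :
    0 ≤ (M * Mᵀ).trace := by
  have : (M * Mᵀ).trace = ∑ i, ∑ j, (M i j) ^ 2 := by
    simp [Matrix.trace, Matrix.diag, Matrix.mul_apply, sq]
  rw [this]
  positivity

private lemma EY_trace_diagonal_mul {N : ℕ} (d : Fin N → ℝ) (M : Matrix (Fin N) (Fin N) ℝ) :
    (Matrix.diagonal d * M).trace = ∑ i, d i * M i i := by
  simp [Matrix.trace, Matrix.diag, Matrix.diagonal_mul]

end EYaux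

private lemma EY_diag_transpose_mul {N : ℕ} (M : Matrix (Fin N) (Fin N) ℝ) (i : Fin N) :
    (Mᵀ * M) i i = ∑ a, (M a i) ^ 2 := by
  simp [Matrix.mul_apply, sq]

private lemma EY_conj_trace {N : ℕ} (Y R : Matrix (Fin N) (Fin N) ℝ) (hRt : Rᵀ = R)
    (hRR : R * R = R) :
    ((Y * R) * (Y * R)ᵀ).trace = ((Yᵀ * Y) * R).trace := by
  rw [Matrix.transpose_mul, hRt]
  have h1 : Y * R * (R * Yᵀ) = Y * (R * R) * Yᵀ := by
    rw [Matrix.mul_assoc Y R (R * Yᵀ), ← Matrix.mul_assoc R R Yᵀ, ← Matrix.mul_assoc Y (R*R) Yᵀ]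
  rw [h1, hRR, Matrix.trace_mul_comm (Y*R) Yᵀ, ← Matrix.mul_assoc]

private lemma EY_sandwich {N : ℕ} (W C C' : Matrix (Fin N) (Fin N) ℝ) (hW1 : Wᵀ * W = 1) :
    (W * C * Wᵀ) * (W * C' * Wᵀ) = W * (C * C') * Wᵀ := by
  rw [Matrix.mul_assoc (W*C) Wᵀ (W * C' * Wᵀ), ← Matrix.mul_assoc Wᵀ (W*C') Wᵀ,
    ← Matrix.mul_assoc Wᵀ W C', hW1, Matrix.one_mul, ← Matrix.mul_assoc (W*C) C' Wᵀ,
    Matrix.mul_assoc W C C']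

private lemma EY_frob_sq {p : ℕ} (M : Matrix (Fin p) (Fin p) ℝ) :
    frobNorm M ^ 2 = (M * Mᵀ).trace :=
  Real.sq_sqrt (EY_trace_mul_transpose_nonneg M)

/-- **Eckart–Young attainment (Frobenius norm).** Let `B ∈ ℝ^{N×N}` with singular values
`σ₁ ≥ ⋯ ≥ σ_N ≥ 0` (square roots of the eigenvalues of `Bᵀ * B` in descending order with
multiplicity) and `0 ≤ k ≤ N`. Then there exists `B*` with `rank B* ≤ k` such that
`‖B − B*‖_F² = σ_{k+1}² + ⋯ + σ_N²`; consequently the minimum of `‖B − X‖_F` over matrices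
`X` of rank at most `k` equals `sqrt (σ_{k+1}² + ⋯ + σ_N²)` (attained by the rank-`k`
truncated SVD of `B`). -/
theorem eckart_young_attainment
    (N k : ℕ) (hkN : k ≤ N)
    (B : Matrix (Fin N) (Fin N) ℝ)
    (hH : (Bᵀ * B).IsHermitian)
    (σ : Fin N → ℝ) (hanti : Antitone σ) (hnonneg : ∀ i, 0 ≤ σ i)
    (hσ : ∃ e : Fin N ≃ Fin N, (fun i => σ i ^ 2) = hH.eigenvalues ∘ e) :
    (∃ Bstar : Matrix (Fin N) (Fin N) ℝ, Bstar.rank ≤ k ∧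
        (frobNorm (B - Bstar)) ^ 2
          = ∑ i ∈ Finset.univ.filter (fun i : Fin N => k ≤ (i : ℕ)), σ i ^ 2) ∧
    IsLeast {t : ℝ | ∃ X : Matrix (Fin N) (Fin N) ℝ, X.rank ≤ k ∧ t = frobNorm (B - X)}
      (Real.sqrt (∑ i ∈ Finset.univ.filter (fun i : Fin N => k ≤ (i : ℕ)), σ i ^ 2)) := by
  classical
  obtain ⟨e, hσe⟩ := hσ
  obtain ⟨W, hW1, hW2, hA⟩ := EY_exists_W B hH σ e hσe
  set μ : Fin N → ℝ := fun i => σ i ^ 2 with hμ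
  have hμa : Antitone μ := fun i j hij => pow_le_pow_left₀ (hnonneg j) (hanti hij) 2
  have hμ0 : ∀ i, 0 ≤ μ i := fun i => sq_nonneg _
  set tail : ℝ := ∑ i ∈ Finset.univ.filter (fun i : Fin N => k ≤ (i : ℕ)), σ i ^ 2 with htail
  have hfilter_eq : Finset.univ.filter (fun i : Fin N => ¬ (i : ℕ) < k)
      = Finset.univ.filter (fun i : Fin N => k ≤ (i : ℕ)) := by
    ext i; simp [not_lt]
  -- trace conjugation by W
  have htrW : ∀ C : Matrix (Fin N) (Fin N) ℝ, (W * C * Wᵀ).trace = C.trace := by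
    intro C
    rw [Matrix.trace_mul_comm, ← Matrix.mul_assoc, hW1, Matrix.one_mul]
  -- the truncation matrices
  set D : Matrix (Fin N) (Fin N) ℝ :=
    Matrix.diagonal (fun i => if (i : ℕ) < k then (1 : ℝ) else 0) with hD
  set E : Matrix (Fin N) (Fin N) ℝ :=
    Matrix.diagonal (fun i => if (i : ℕ) < k then (0 : ℝ) else 1) with hE
  have hDE : D + E = 1 := by
    rw [hD, hE, Matrix.diagonal_add]
    have h0 : (fun i : Fin N => (if (i : ℕ) < k then (1 : ℝ) else 0)
        + (if (i : ℕ) < k then (0 : ℝ) else 1)) = fun _ => (1 : ℝ) := by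
      funext i; by_cases h : (i : ℕ) < k <;> simp [h]
    rw [h0, Matrix.diagonal_one]
  have hEE : E * E = E := by
    rw [hE, Matrix.diagonal_mul_diagonal]
    have h0 : (fun i : Fin N => (if (i : ℕ) < k then (0 : ℝ) else 1)
        * (if (i : ℕ) < k then (0 : ℝ) else 1))
        = fun i : Fin N => if (i : ℕ) < k then (0 : ℝ) else 1 := by
      funext i; by_cases h : (i : ℕ) < k <;> simp [h]
    rw [h0]
  have hEt : Eᵀ = E := Matrix.diagonal_transpose _
  have hPt : (W * E * Wᵀ)ᵀ = W * E * Wᵀ := by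
    rw [Matrix.transpose_mul, Matrix.transpose_mul, Matrix.transpose_transpose, hEt,
      Matrix.mul_assoc]
  have hPP : (W * E * Wᵀ) * (W * E * Wᵀ) = W * E * Wᵀ := by
    rw [EY_sandwich W E E hW1, hEE]
  -- rank bound for the truncated matrix
  have hrank : (B * (W * D * Wᵀ)).rank ≤ k := by
    calc (B * (W * D * Wᵀ)).rank ≤ (W * D * Wᵀ).rank := Matrix.rank_mul_le_right _ _
      _ ≤ (W * D).rank := Matrix.rank_mul_le_left _ _
      _ ≤ D.rank := Matrix.rank_mul_le_right _ _
      _ = k := by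
          rw [hD, Matrix.rank_diagonal, Fintype.card_subtype]
          have h0 : Finset.univ.filter
              (fun i : Fin N => (if (i : ℕ) < k then (1 : ℝ) else 0) ≠ 0)
              = Finset.univ.filter (fun i : Fin N => (i : ℕ) < k) := by
            apply Finset.filter_congr
            intro i _
            by_cases h : (i : ℕ) < k <;> simp [h]
          rw [h0, EY_card_filt hkN]
  -- decomposition of the residual
  have hsub : B - B * (W * D * Wᵀ) = B * (W * E * Wᵀ) := by
    have h1 : W * D * Wᵀ + W * E * Wᵀ = 1 := by
      have h2 : W * (D + E) * Wᵀ = 1 := by rw [hDE, Matrix.mul_one, hW2]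
      calc W * D * Wᵀ + W * E * Wᵀ = W * (D + E) * Wᵀ := by
            rw [Matrix.mul_add, Matrix.add_mul]
        _ = 1 := h2
    calc B - B * (W * D * Wᵀ) = B * (1 - W * D * Wᵀ) := by
          rw [Matrix.mul_sub, Matrix.mul_one]
      _ = B * (W * E * Wᵀ) := by rw [(eq_sub_of_add_eq' h1).symm]
  -- the trace of the residual
  have htrace_res : ((B * (W * E * Wᵀ)) * (B * (W * E * Wᵀ))ᵀ).trace = tail := by
    rw [EY_conj_trace B (W * E * Wᵀ) hPt hPP, hA, EY_sandwich W _ E hW1, htrW,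
      Matrix.diagonal_mul_diagonal, Matrix.trace_diagonal]
    rw [htail, Finset.sum_filter]
    apply Finset.sum_congr rfl
    intro i _
    by_cases h : (i : ℕ) < k
    · simp [h, Nat.not_le.2 h]
    · simp [h, Nat.not_lt.1 h, hμ]
  have hattain : frobNorm (B - B * (W * D * Wᵀ)) ^ 2 = tail := by
    rw [hsub, EY_frob_sq, htrace_res]
  -- the lower bound
  have hlower : ∀ X : Matrix (Fin N) (Fin N) ℝ, X.rank ≤ k →
      tail ≤ ((B - X) * (B - X)ᵀ).trace := by
    intro X hXr
    obtain ⟨Q, hQt, hQQ, hXQ, hQtr⟩ := EY_exists_proj N k X hXr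
    set Q' : Matrix (Fin N) (Fin N) ℝ := 1 - Q with hQ'
    have hQ't : Q'ᵀ = Q' := by
      rw [hQ', Matrix.transpose_sub, Matrix.transpose_one, hQt]
    have hQ'Q' : Q' * Q' = Q' := by
      have h0 : (1 - Q) * (1 - Q) = 1 - Q - Q + Q * Q := by noncomm_ring
      rw [hQ', h0, hQQ]; abel
    set t : Fin N → ℝ := fun i => (Wᵀ * Q * W) i i with ht
    have hGform : Wᵀ * Q * W = (Q * W)ᵀ * (Q * W) := by
      rw [Matrix.transpose_mul, hQt, Matrix.mul_assoc Wᵀ Q W, Matrix.mul_assoc Wᵀ Q (Q * W),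
        ← Matrix.mul_assoc Q Q W, hQQ]
    have ht0 : ∀ i, 0 ≤ t i := by
      intro i
      have h1 : t i = ∑ a, ((Q * W) a i) ^ 2 := by
        rw [ht]; simp only []; rw [hGform, EY_diag_transpose_mul]
      rw [h1]; positivity
    have hG'form : Wᵀ * Q' * W = 1 - Wᵀ * Q * W := by
      rw [hQ', Matrix.mul_sub, Matrix.sub_mul, Matrix.mul_one, hW1]
    have hG'psd : Wᵀ * Q' * W = (Q' * W)ᵀ * (Q' * W) := by
      rw [Matrix.transpose_mul, hQ't, Matrix.mul_assoc Wᵀ Q' W, Matrix.mul_assoc Wᵀ Q' (Q' * W),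
        ← Matrix.mul_assoc Q' Q' W, hQ'Q']
    have ht1 : ∀ i, t i ≤ 1 := by
      intro i
      have h1 : (Wᵀ * Q' * W) i i = ∑ a, ((Q' * W) a i) ^ 2 := by
        rw [hG'psd, EY_diag_transpose_mul]
      have h2 : (Wᵀ * Q' * W) i i = 1 - t i := by
        rw [hG'form]; simp [Matrix.sub_apply, Matrix.one_apply_eq, ht]
      have h3 : 0 ≤ 1 - t i := by rw [← h2, h1]; positivity
      linarith
    have hts : ∑ i, t i ≤ (k : ℝ) := by
      have h1 : ∑ i, t i = (Wᵀ * Q * W).trace := rfl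
      have h2 : (Wᵀ * Q * W).trace = Q.trace := by
        rw [Matrix.trace_mul_comm, ← Matrix.mul_assoc, hW2, Matrix.one_mul]
      rw [h1, h2]; exact hQtr
    have htrAQ : ((Bᵀ * B) * Q).trace = ∑ i, μ i * t i := by
      rw [hA, Matrix.trace_mul_comm, ← Matrix.mul_assoc,
        Matrix.trace_mul_comm, ← Matrix.mul_assoc, ← Matrix.mul_assoc,
        Matrix.trace_mul_comm, EY_trace_diagonal_mul]
    have htrA : (Bᵀ * B).trace = ∑ i, μ i := by
      rw [hA, htrW, Matrix.trace_diagonal]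
    have hcount := EY_count_le hkN μ t hμa hμ0 ht0 ht1 hts
    have htail_le : tail ≤ (Bᵀ * B).trace - ((Bᵀ * B) * Q).trace := by
      have hsplit : ∑ i ∈ Finset.univ.filter (fun i : Fin N => (i : ℕ) < k), μ i + tail
          = ∑ i, μ i := by
        rw [htail, ← hfilter_eq]
        exact Finset.sum_filter_add_sum_filter_not _ _ _
      rw [htrA, htrAQ]
      linarith
    -- split the trace
    set Y : Matrix (Fin N) (Fin N) ℝ := B - X with hY
    have hYQ' : Y * Q' = B * Q' := by
      have hXz : X * Q' = 0 := by rw [hQ', Matrix.mul_sub, Matrix.mul_one, hXQ, sub_self]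
      rw [hY, Matrix.sub_mul, hXz, sub_zero]
    have hsplit2 : (Y * Yᵀ).trace
        = ((Y * Q) * (Y * Q)ᵀ).trace + ((B * Q') * (B * Q')ᵀ).trace := by
      have e1 : ((Y * Q) * (Y * Q)ᵀ).trace = ((Yᵀ * Y) * Q).trace :=
        EY_conj_trace Y Q hQt hQQ
      have e2 : ((B * Q') * (B * Q')ᵀ).trace = ((Yᵀ * Y) * Q').trace := by
        rw [← hYQ']; exact EY_conj_trace Y Q' hQ't hQ'Q'
      have e3 : Q + Q' = 1 := by rw [hQ']; abel
      rw [e1, e2, ← Matrix.trace_add, ← Matrix.mul_add, e3, Matrix.mul_one,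
        Matrix.trace_mul_comm]
    have hQ'term : ((B * Q') * (B * Q')ᵀ).trace
        = (Bᵀ * B).trace - ((Bᵀ * B) * Q).trace := by
      rw [EY_conj_trace B Q' hQ't hQ'Q', hQ', Matrix.mul_sub, Matrix.mul_one,
        Matrix.trace_sub]
    have hfirst : 0 ≤ ((Y * Q) * (Y * Q)ᵀ).trace := EY_trace_mul_transpose_nonneg _
    calc tail ≤ (Bᵀ * B).trace - ((Bᵀ * B) * Q).trace := htail_le
      _ = ((B * Q') * (B * Q')ᵀ).trace := hQ'term.symm
      _ ≤ ((Y * Q) * (Y * Q)ᵀ).trace + ((B * Q') * (B * Q')ᵀ).trace := by linarith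
      _ = (Y * Yᵀ).trace := hsplit2.symm
      _ = ((B - X) * (B - X)ᵀ).trace := by rw [hY]
  have htail_nonneg : 0 ≤ tail := by
    rw [htail]; apply Finset.sum_nonneg; intro i _; positivity
  constructor
  · exact ⟨B * (W * D * Wᵀ), hrank, hattain⟩
  · constructor
    · refine ⟨B * (W * D * Wᵀ), hrank, ?_⟩
      have hfn : 0 ≤ frobNorm (B - B * (W * D * Wᵀ)) := Real.sqrt_nonneg _
      rw [← hattain, Real.sqrt_sq hfn]
    · rintro s ⟨X, hXr, rfl⟩
      have h1 : tail ≤ ((B - X) * (B - X)ᵀ).trace := hlower X hXr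
      have : frobNorm (B - X) = Real.sqrt (((B - X) * (B - X)ᵀ).trace) := rfl
      rw [this]
      exact Real.sqrt_le_sqrt h1
end
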